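/- If n is odd, there do not exist n×n real matrices P, Q with P skew-symmetric, Q symmetric, tr Q = 0, PQ + QP = 0, and Q² − P² = I. -/

import Mathlib

open Matrix

/-- The trace of an idempotent square matrix over ℂ is a natural number. -/
lemma trace_idem_nat {n : ℕ} (E : Matrix (Fin n) (Fin n) ℂ) (hE : E * E = E) :
    ∃ k : ℕ, E.trace = (k : ℂ) := by
  set f := Matrix.toLin' E with hf
  have hff : f ∘ₗ f = f := by
    rw [hf, ← Matrix.toLin'_mul, hE]
  obtain ⟨p, hp⟩ := (LinearMap.isProj_iff_isIdempotentElem f).mpr hff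
  refine ⟨Module.finrank ℂ p, ?_⟩
  have htr := hp.trace
  have h2 : LinearMap.trace ℂ _ f = E.trace := by
    rw [LinearMap.trace_eq_matrix_trace ℂ (Pi.basisFun ℂ (Fin n)) f]
    congr 1
    rw [hf, LinearMap.toMatrix_eq_toMatrix', LinearMap.toMatrix'_toLin']
  rw [← h2, htr]

/-- If n is odd there are no n×n real matrices P, Q with P skew-symmetric,
Q symmetric, tr Q = 0, PQ + QP = 0 and Q² − P² = I. -/
theorem no_odd_anticommuting_pair {n : ℕ} (hn : Odd n) :
    ¬ ∃ P Q : Matrix (Fin n) (Fin n) ℝ,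
        Pᵀ = -P ∧ Qᵀ = Q ∧ Q.trace = 0 ∧ P * Q + Q * P = 0 ∧ Q * Q - P * P = 1 := by
  rintro ⟨P, Q, hP, hQ, htQ, hanti, hsq⟩
  have htP : P.trace = 0 := by
    have := congrArg Matrix.trace hP
    rw [Matrix.trace_transpose, Matrix.trace_neg] at this
    linarith
  -- move to ℂ
  set φ : Matrix (Fin n) (Fin n) ℝ →+* Matrix (Fin n) (Fin n) ℂ := (algebraMap ℝ ℂ).mapMatrix with hφ
  set Pc := φ P with hPc
  set Qc := φ Q with hQc
  set B : Matrix (Fin n) (Fin n) ℂ := Complex.I • Pc - Qc with hB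
  have h1 : Pc * Qc + Qc * Pc = 0 := by
    rw [hPc, hQc, ← _root_.map_mul φ, ← _root_.map_mul φ, ← map_add, hanti, map_zero]
  have h2 : Qc * Qc - Pc * Pc = 1 := by
    rw [hPc, hQc, ← _root_.map_mul φ, ← _root_.map_mul φ, ← map_sub, hsq, _root_.map_one φ]
  have hBB : B * B = 1 := by
    have expand : B * B =
        (-1 : ℂ) • (Pc * Pc) - Complex.I • (Pc * Qc + Qc * Pc) + Qc * Qc := by
      rw [hB, Matrix.sub_mul, Matrix.mul_sub, Matrix.mul_sub,
        Matrix.smul_mul, Matrix.mul_smul, Matrix.smul_mul, Matrix.mul_smul,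
        smul_smul, Complex.I_mul_I, smul_add]
      module
    rw [expand, h1, smul_zero, sub_zero, neg_one_smul, ← h2]
    abel
  -- traces over ℂ
  have htPc : Pc.trace = 0 := by
    rw [hPc, hφ]
    have := (AddMonoidHom.map_trace (algebraMap ℝ ℂ) P).symm
    rw [htP] at this
    simpa using this
  have htQc : Qc.trace = 0 := by
    rw [hQc, hφ]
    have := (AddMonoidHom.map_trace (algebraMap ℝ ℂ) Q).symm
    rw [htQ] at this
    simpa using this
  have htB : B.trace = 0 := by
    rw [hB, Matrix.trace_sub, Matrix.trace_smul, htPc, htQc]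
    simp
  -- idempotent E = (1+B)/2
  clear_value B
  set E : Matrix (Fin n) (Fin n) ℂ := (2⁻¹ : ℂ) • (1 + B) with hE
  have hEE : E * E = E := by
    rw [hE]
    simp only [Matrix.smul_mul, Matrix.mul_smul, smul_smul, Matrix.add_mul,
      Matrix.mul_add, one_mul, mul_one, hBB]
    match_scalars <;> ring
  obtain ⟨k, hk⟩ := trace_idem_nat E hEE
  have htE : E.trace = (n : ℂ) / 2 := by
    rw [hE, Matrix.trace_smul, Matrix.trace_add, htB, Matrix.trace_one]
    simp
    ring
  rw [htE] at hk
  have hnk : (n : ℂ) = ((2 * k : ℕ) : ℂ) := by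
    push_cast
    field_simp at hk
    linear_combination hk
  have hn2 : n = 2 * k := Nat.cast_injective hnk
  exact (Nat.not_even_iff_odd.mpr hn) ⟨k, by omega⟩
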